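/- Let n ≥ 1 and let q ≥ 2 be an integer. For every partition λ of n with λ ≠ (1,1,…,1), the quantity D⁻_λ(q) = |(−q)^{a(λ)} · Π_{i=1}^n ((−q)^i − 1) / Π_{(i,j)∈λ} ((−q)^{h_{i,j}} − 1)| satisfies D⁻_λ(q) < q^{n(n−1)/2}. Equivalently, any unipotent character of GU_n(q) other than the Steinberg character has smaller degree than the Steinberg character. -/

import Mathlib

open scoped Classical

/-- The hook length of a cell `c` in a Young diagram `Y`: the number of cells `(i',j')` of `Y`
with `i' ≥ i`, `j' ≥ j` and `i' = i` or `j' = j`, where `c = (i,j)` (0-indexed). -/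
def hookLength (Y : YoungDiagram) (c : ℕ × ℕ) : ℕ :=
  (Y.cells.filter fun d => c.1 ≤ d.1 ∧ c.2 ≤ d.2 ∧ (d.1 = c.1 ∨ d.2 = c.2)).card

/-- The statistic `a(λ) = ∑ᵢ (i-1)·aᵢ` of a partition (rows of the diagram are 0-indexed,
so this is the sum of the row indices of all cells). -/
def aStat (Y : YoungDiagram) : ℕ := ∑ c ∈ Y.cells, c.1

/-- The degree `D_λ(q)` of the unipotent character of `GL_n(q)` indexed by the partition `λ`
(quantized hook formula). -/
noncomputable def Dq (Y : YoungDiagram) (q : ℝ) : ℝ :=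
  q ^ aStat Y * (∏ i ∈ Finset.range Y.card, (q ^ (i + 1) - 1)) /
    ∏ c ∈ Y.cells, (q ^ hookLength Y c - 1)

/-- The degree `D⁻_λ(q)` of the unipotent character of `GU_n(q)` indexed by the partition `λ`,
obtained from the quantized hook formula by replacing `q` with `-q` and adjusting the sign. -/
noncomputable def Dqminus (Y : YoungDiagram) (q : ℝ) : ℝ :=
  |(-q) ^ aStat Y * (∏ i ∈ Finset.range Y.card, ((-q) ^ (i + 1) - 1)) /
    ∏ c ∈ Y.cells, ((-q) ^ hookLength Y c - 1)|

namespace GUAux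

open Finset

noncomputable def uu (q : ℝ) (m : ℕ) : ℝ := q ^ m - (-1) ^ m

lemma uu_pos {q : ℝ} (hq : 2 ≤ q) {m : ℕ} (hm : 1 ≤ m) : 0 < uu q m := by
  have h1 : (2:ℝ) ≤ q ^ m := by
    calc (2:ℝ) ≤ q := hq
    _ ≤ q ^ m := le_self_pow₀ (by linarith) (by omega)
  have h2 : ((-1:ℝ)) ^ m ≤ 1 := by
    rcases Nat.even_or_odd m with h | h
    · rw [h.neg_one_pow]
    · rw [h.neg_one_pow]; norm_num
  unfold uu; linarith

lemma abs_eq_uu {q : ℝ} (hq : 1 ≤ q) (m : ℕ) : |(-q) ^ m - 1| = uu q m := by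
  unfold uu
  rcases Nat.even_or_odd m with h | h
  · rw [h.neg_pow, h.neg_one_pow]
    have : (1:ℝ) ≤ q ^ m := one_le_pow₀ hq
    rw [abs_of_nonneg (by linarith)]
  · rw [h.neg_pow, h.neg_one_pow]
    have : (0:ℝ) < q ^ m := by positivity
    rw [abs_of_nonpos (by linarith)]; ring

lemma uu_eq {q : ℝ} (hq : 2 ≤ q) (m : ℕ) : uu q m = q ^ m * (1 - (-q⁻¹) ^ m) := by
  have hq0 : q ≠ 0 := by linarith
  unfold uu
  have : (-q⁻¹) ^ m = (-1) ^ m * (q⁻¹) ^ m := by rw [← mul_pow]; ring_nf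
  rw [this, mul_sub, mul_one, ← mul_assoc, mul_comm (q ^ m), mul_assoc, ← mul_pow]
  field_simp
  ring

lemma factor_pos {x : ℝ} (hx0 : 0 ≤ x) (hx : x ≤ 1/2) {k : ℕ} (hk : 1 ≤ k) :
    (0:ℝ) < 1 - (-x) ^ k ∧ x ^ k ≤ 1/2 := by
  have h1 : x ^ k ≤ x ^ 1 := pow_le_pow_of_le_one hx0 (by linarith) hk
  have h2 : |(-x) ^ k| = x ^ k := by
    rw [abs_pow, abs_neg, abs_of_nonneg hx0]
  have := abs_le.mp (le_of_eq h2)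
  constructor
  · nlinarith [neg_abs_le ((-x)^k), le_abs_self ((-x)^k)]
  · simpa using h1.trans (by linarith)

lemma kl1 (x : ℝ) (hx0 : 0 ≤ x) (hx : x ≤ 1/2) :
    ∀ r m : ℕ, 1 ≤ m →
      (∏ i ∈ range r, (1 - (-x) ^ (m + i)) ≤ 1 + x ^ m) ∧
      (Even m → ∏ i ∈ range r, (1 - (-x) ^ (m + i)) ≤ 1) := by
  intro r
  induction r with
  | zero =>
    intro m hm
    simp only [range_zero, prod_empty]
    have : (0:ℝ) ≤ x ^ m := by positivity
    exact ⟨by linarith, fun _ => le_refl 1⟩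
  | succ r ih =>
    intro m hm
    have hprod : ∏ i ∈ range (r+1), (1 - (-x) ^ (m + i))
        = (1 - (-x) ^ m) * ∏ i ∈ range r, (1 - (-x) ^ ((m+1) + i)) := by
      rw [Finset.prod_range_succ', mul_comm, Nat.add_zero]
      congr 1
      exact Finset.prod_congr rfl fun i _ => by rw [show m + (i+1) = (m+1)+i by omega]
    have ihm := ih (m+1) (by omega)
    have hrest_pos : (0:ℝ) ≤ ∏ i ∈ range r, (1 - (-x) ^ ((m+1) + i)) :=
      Finset.prod_nonneg fun i _ => (factor_pos hx0 hx (by omega)).1.le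
    rcases Nat.even_or_odd m with he | ho
    · have hfac : (1 - (-x) ^ m) = 1 - x ^ m := by rw [he.neg_pow]
      have hxm : x ^ m ≤ 1/2 := (factor_pos hx0 hx hm).2
      have hxm0 : 0 ≤ x ^ m := by positivity
      have hb : ∏ i ∈ range r, (1 - (-x) ^ ((m+1) + i)) ≤ 1 + x ^ (m+1) := ihm.1
      have key : ∏ i ∈ range (r+1), (1 - (-x) ^ (m + i)) ≤ 1 := by
        rw [hprod, hfac]
        have h1 : (1 - x ^ m) * ∏ i ∈ range r, (1 - (-x) ^ ((m+1) + i))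
            ≤ (1 - x ^ m) * (1 + x ^ (m+1)) :=
          mul_le_mul_of_nonneg_left hb (by linarith)
        have hx1 : x ^ (m+1) = x * x ^ m := by ring
        have hb2 : x ^ (m+1) ≤ x ^ m / 2 := by
          rw [hx1]; nlinarith
        nlinarith [mul_nonneg hxm0 (pow_nonneg hx0 (m+1))]
      exact ⟨key.trans (by nlinarith), fun _ => key⟩
    · have hfac : (1 - (-x) ^ m) = 1 + x ^ m := by rw [ho.neg_pow]; ring
      have hb : ∏ i ∈ range r, (1 - (-x) ^ ((m+1) + i)) ≤ 1 :=
        ihm.2 ho.add_one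
      constructor
      · rw [hprod, hfac]
        calc (1 + x ^ m) * ∏ i ∈ range r, (1 - (-x) ^ ((m+1) + i))
            ≤ (1 + x ^ m) * 1 := mul_le_mul_of_nonneg_left hb (by positivity)
          _ = 1 + x ^ m := by ring
      · intro he
        exact absurd he (Nat.not_even_iff_odd.mpr ho)

lemma weier {ι : Type*} (S : Finset ι) (f : ι → ℝ) (h0 : ∀ i ∈ S, 0 ≤ f i)
    (h1 : ∀ i ∈ S, f i ≤ 1) : 1 - ∑ i ∈ S, f i ≤ ∏ i ∈ S, (1 - f i) := by
  classical
  induction S using Finset.induction_on with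
  | empty => simp
  | @insert a s hni ih =>
    rw [Finset.sum_insert hni, Finset.prod_insert hni]
    have hs0 : (0:ℝ) ≤ ∑ i ∈ s, f i :=
      Finset.sum_nonneg fun i hi => h0 i (Finset.mem_insert_of_mem hi)
    have ih' := ih (fun i hi => h0 i (Finset.mem_insert_of_mem hi))
      (fun i hi => h1 i (Finset.mem_insert_of_mem hi))
    have ha0 := h0 a (Finset.mem_insert_self a s)
    have ha1 := h1 a (Finset.mem_insert_self a s)
    nlinarith

lemma geom_bound (y : ℝ) (hy0 : 0 ≤ y) (hy : y < 1) (T : Finset ℕ) (hT : ∀ m ∈ T, 1 ≤ m) :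
    ∑ m ∈ T, y ^ m ≤ y / (1 - y) := by
  classical
  obtain ⟨N, hN⟩ : ∃ N, ∀ m ∈ T, m < N + 1 := by
    refine ⟨T.sup id, fun m hm => ?_⟩
    exact Nat.lt_succ_of_le (Finset.le_sup (f := id) hm)
  have hsub : T ⊆ Finset.Ico 1 (N+1) := fun m hm =>
    Finset.mem_Ico.mpr ⟨hT m hm, hN m hm⟩
  have h1 : ∑ m ∈ T, y ^ m ≤ ∑ m ∈ Finset.Ico 1 (N+1), y ^ m :=
    Finset.sum_le_sum_of_subset_of_nonneg hsub (fun i _ _ => by positivity)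
  have h2 : ∑ m ∈ Finset.Ico 1 (N+1), y ^ m = y * ∑ i ∈ range N, y ^ i := by
    rw [Finset.sum_Ico_eq_sum_range]
    simp only [Nat.add_sub_cancel]
    rw [Finset.mul_sum]
    exact Finset.sum_congr rfl fun i _ => by rw [pow_add, pow_one]
  have h3 : ∑ i ∈ range N, y ^ i ≤ 1 / (1 - y) := by
    have hmul := geom_sum_mul y N
    rw [le_div_iff₀ (by linarith : (0:ℝ) < 1 - y)]
    have : (0:ℝ) ≤ y ^ N := by positivity
    nlinarith
  calc ∑ m ∈ T, y ^ m ≤ y * ∑ i ∈ range N, y ^ i := by rw [← h2]; exact h1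
    _ ≤ y * (1 / (1 - y)) := mul_le_mul_of_nonneg_left h3 hy0
    _ = y / (1 - y) := by ring

lemma kl2 (x : ℝ) (hx0 : 0 ≤ x) (hx : x ≤ 1/2) (r : ℕ) (β : ℕ → ℕ)
    (h1 : ∀ i < r, 1 ≤ β i)
    (hinj : ∀ i < r, ∀ j < r, β i = β j → i = j) :
    (2:ℝ)/3 ≤ ∏ i ∈ range r, (1 - (-x) ^ β i) := by
  classical
  set E := (range r).filter (fun i => Even (β i)) with hE
  have hsplit := Finset.prod_filter_mul_prod_filter_not (range r)
    (fun i => Even (β i)) (fun i => 1 - (-x) ^ β i)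
  have hodd : (1:ℝ) ≤ ∏ i ∈ (range r).filter (fun i => ¬ Even (β i)), (1 - (-x) ^ β i) := by
    have : ∏ i ∈ (range r).filter (fun i => ¬ Even (β i)), (1:ℝ)
        ≤ ∏ i ∈ (range r).filter (fun i => ¬ Even (β i)), (1 - (-x) ^ β i) := by
      apply Finset.prod_le_prod (fun i _ => zero_le_one)
      intro i hi
      obtain ⟨hi1, hi2⟩ := Finset.mem_filter.mp hi
      have ho : Odd (β i) := Nat.not_even_iff_odd.mp hi2
      rw [ho.neg_pow]
      have : (0:ℝ) ≤ x ^ β i := by positivity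
      linarith
    simpa using this
  have heven_eq : ∏ i ∈ E, (1 - (-x) ^ β i) = ∏ i ∈ E, (1 - x ^ β i) := by
    apply Finset.prod_congr rfl
    intro i hi
    have he : Even (β i) := (Finset.mem_filter.mp hi).2
    rw [he.neg_pow]
  have hsum : ∑ i ∈ E, x ^ β i ≤ 1/3 := by
    have hrw : ∀ i ∈ E, x ^ β i = (x^2) ^ (β i / 2) := by
      intro i hi
      have he : Even (β i) := (Finset.mem_filter.mp hi).2
      rw [← pow_mul, Nat.mul_div_cancel' he.two_dvd]
    rw [Finset.sum_congr rfl hrw]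
    have hinj2 : ∀ i ∈ E, ∀ j ∈ E, β i / 2 = β j / 2 → i = j := by
      intro i hi j hj hij
      have hei : Even (β i) := (Finset.mem_filter.mp hi).2
      have hej : Even (β j) := (Finset.mem_filter.mp hj).2
      have hiR : i ∈ range r := (Finset.mem_filter.mp hi).1
      have hjR : j ∈ range r := (Finset.mem_filter.mp hj).1
      apply hinj i (Finset.mem_range.mp hiR) j (Finset.mem_range.mp hjR)
      obtain ⟨a, ha⟩ := hei; obtain ⟨b, hb⟩ := hej
      omega
    have := Finset.sum_image (s := E) (g := fun i => β i / 2)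
      (f := fun m => (x^2 : ℝ) ^ m) hinj2
    rw [← this]
    have hy0 : (0:ℝ) ≤ x^2 := by positivity
    have hy1 : x^2 < 1 := by nlinarith
    have hmem : ∀ m ∈ E.image (fun i => β i / 2), 1 ≤ m := by
      intro m hm
      obtain ⟨i, hi, rfl⟩ := Finset.mem_image.mp hm
      have hei : Even (β i) := (Finset.mem_filter.mp hi).2
      have hiR := Finset.mem_range.mp (Finset.mem_filter.mp hi).1
      have := h1 i hiR
      obtain ⟨a, ha⟩ := hei
      omega
    calc ∑ m ∈ E.image (fun i => β i / 2), (x^2) ^ m ≤ x^2 / (1 - x^2) :=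
          geom_bound (x^2) hy0 hy1 _ hmem
      _ ≤ 1/3 := by rw [div_le_iff₀ (by nlinarith)]; nlinarith
  have hxb : ∀ i ∈ E, x ^ β i ≤ 1 := by
    intro i hi
    have hiR := Finset.mem_range.mp (Finset.mem_filter.mp hi).1
    exact pow_le_one₀ hx0 (by linarith)
  have heven : (2:ℝ)/3 ≤ ∏ i ∈ E, (1 - x ^ β i) := by
    have := weier E (fun i => x ^ β i) (fun i _ => by positivity) hxb
    linarith
  rw [← hsplit, heven_eq]
  nlinarith [heven, hodd]

lemma two_dvd_mul_pred (m : ℕ) : m * (m-1) / 2 * 2 = m * (m-1) := by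
  apply Nat.div_mul_cancel
  cases m with
  | zero => simp
  | succ t => simpa [Nat.mul_comm] using (Nat.even_mul_succ_self t).two_dvd

lemma tri_add (s r : ℕ) : (s+r) * ((s+r)-1) / 2 = s*(s-1)/2 + (r*(r-1)/2 + r*s) := by
  have e1 := two_dvd_mul_pred s
  have e2 := two_dvd_mul_pred r
  have e3 := two_dvd_mul_pred (s+r)
  have e4 : (s+r) * ((s+r)-1) = s*(s-1) + r*(r-1) + 2*(r*s) := by
    cases s with
    | zero => simp
    | succ u =>
      cases r with
      | zero => simp
      | succ t =>
        have h1 : u+1+(t+1)-1 = u + t + 1 := by omega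
        have h2 : u+1-1 = u := by omega
        have h3 : t+1-1 = t := by omega
        rw [h1, h2, h3]
        ring
  omega

lemma chain {r : ℕ} {β : ℕ → ℕ} (hdec : ∀ i, i + 1 < r → β (i+1) < β i) :
    ∀ d i, i + d < r → β (i+d) + d ≤ β i := by
  intro d
  induction d with
  | zero => intro i _; simp
  | succ d ih =>
    intro i hi
    rw [show i + (d+1) = (i+1)+d by omega]
    have h1 := ih (i+1) (by omega)
    have h2 := hdec i (by omega)
    omega

lemma key_strict (q : ℝ) (hq : 2 ≤ q) (r s : ℕ) (hr : 1 ≤ r) (hs : 1 ≤ s) (β : ℕ → ℕ)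
    (hdec : ∀ i, i + 1 < r → β (i+1) < β i)
    (h1 : ∀ i < r, 1 ≤ β i) (h0 : r + 1 ≤ β 0) :
    ∏ i ∈ range r, uu q (s + 1 + i) < q ^ (r * s) * ∏ i ∈ range r, uu q (β i) := by
  have hq0 : (0:ℝ) < q := by linarith
  have hq1 : (1:ℝ) ≤ q := by linarith
  set x := q⁻¹ with hxdef
  have hx0 : 0 ≤ x := by positivity
  have hx : x ≤ 1/2 := by
    rw [hxdef, inv_eq_one_div]
    exact one_div_le_one_div_of_le two_pos hq
  have hchain := chain hdec
  have hinj : ∀ i < r, ∀ j < r, β i = β j → i = j := by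
    intro i hi j hj hij
    rcases lt_trichotomy i j with h | h | h
    · have := hchain (j - i) i (by omega)
      rw [show i + (j-i) = j by omega] at this
      omega
    · exact h
    · have := hchain (i - j) j (by omega)
      rw [show j + (i-j) = i by omega] at this
      omega
  have hlow : ∀ i, 1 ≤ i → i < r → r - i ≤ β i := by
    intro i hi1 hir
    have := hchain (r - 1 - i) i (by omega)
    have hb := h1 (i + (r-1-i)) (by omega)
    omega
  have hsumβ : r * (r+1) / 2 + 1 ≤ ∑ i ∈ range r, β i := by
    have hle : ∑ i ∈ range r, ((r - i) + (if i = 0 then 1 else 0)) ≤ ∑ i ∈ range r, β i := by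
      apply Finset.sum_le_sum
      intro i hi
      rcases Nat.eq_zero_or_pos i with rfl | hipos
      · simpa using h0
      · have := hlow i hipos (Finset.mem_range.mp hi)
        simp [Nat.pos_iff_ne_zero.mp hipos]
        omega
    have hsum1 : ∑ i ∈ range r, ((r - i) + (if i = 0 then 1 else 0))
        = (∑ i ∈ range r, (r - i)) + 1 := by
      rw [Finset.sum_add_distrib]
      congr 1
      rw [Finset.sum_ite_eq' (range r) 0 (fun _ => 1)]
      simp only [Finset.mem_range]
      rw [if_pos (by omega)]
    have hsum2 : ∑ i ∈ range r, (r - i) = ∑ i ∈ range r, (i + 1) := by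
      have := Finset.sum_range_reflect (fun j => j + 1) r
      rw [← this]
      apply Finset.sum_congr rfl
      intro i hi
      have := Finset.mem_range.mp hi
      omega
    have hsum3 : ∑ i ∈ range r, (i + 1) = r * (r-1) / 2 + r := by
      rw [Finset.sum_add_distrib, Finset.sum_range_id, Finset.sum_const, Finset.card_range,
        smul_eq_mul, mul_one]
    have e1 := two_dvd_mul_pred r
    have e2 := two_dvd_mul_pred (r+1)
    have e3 : (r+1) * ((r+1)-1) = r * (r-1) + 2 * r := by
      cases r with
      | zero => simp
      | succ t => simp [Nat.succ_sub_one]; ring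
    have : r * (r+1) = (r+1) * ((r+1) - 1) := by simp [Nat.mul_comm]
    omega
  have hL : ∏ i ∈ range r, uu q (s+1+i)
      = q ^ (∑ i ∈ range r, (s+1+i)) * ∏ i ∈ range r, (1 - (-x) ^ (s+1+i)) := by
    rw [← Finset.prod_pow_eq_pow_sum, ← Finset.prod_mul_distrib]
    exact Finset.prod_congr rfl fun i _ => uu_eq hq _
  have hR : ∏ i ∈ range r, uu q (β i)
      = q ^ (∑ i ∈ range r, β i) * ∏ i ∈ range r, (1 - (-x) ^ (β i)) := by
    rw [← Finset.prod_pow_eq_pow_sum, ← Finset.prod_mul_distrib]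
    exact Finset.prod_congr rfl fun i _ => uu_eq hq _
  have hup : ∏ i ∈ range r, (1 - (-x) ^ (s+1+i)) ≤ 5/4 := by
    have h := (kl1 x hx0 hx r (s+1) (by omega)).1
    have hxs : x ^ (s+1) ≤ x ^ 2 := pow_le_pow_of_le_one hx0 (by linarith) (by omega)
    have hx2 : x ^ 2 ≤ 1/4 := by nlinarith
    calc ∏ i ∈ range r, (1 - (-x) ^ (s+1+i)) ≤ 1 + x ^ (s+1) := h
      _ ≤ 5/4 := by linarith
  have hlo : (2:ℝ)/3 ≤ ∏ i ∈ range r, (1 - (-x) ^ (β i)) := kl2 x hx0 hx r β h1 hinj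
  have hT : ∑ i ∈ range r, (s+1+i) = r * s + r * (r+1) / 2 := by
    rw [Finset.sum_add_distrib, Finset.sum_range_id, Finset.sum_const, Finset.card_range,
      smul_eq_mul]
    have e1 := two_dvd_mul_pred r
    have e2 := two_dvd_mul_pred (r+1)
    have e3 : (r+1) * ((r+1)-1) = r * (r-1) + 2 * r := by
      cases r with
      | zero => simp
      | succ t => simp [Nat.succ_sub_one]; ring
    have e4 : r * (r+1) = (r+1) * ((r+1) - 1) := by simp [Nat.mul_comm]
    have e5 : r * (s+1) = r * s + r := by ring
    omega
  set T := ∑ i ∈ range r, (s+1+i) with hTdef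
  have hqT : (0:ℝ) < q ^ T := by positivity
  have hQlo : (0:ℝ) ≤ ∏ i ∈ range r, (1 - (-x) ^ (β i)) := by linarith
  have hstep1 : ∏ i ∈ range r, uu q (s+1+i) ≤ q ^ T * (5/4) := by
    rw [hL]
    exact mul_le_mul_of_nonneg_left hup (le_of_lt hqT)
  have hstep2 : q ^ T * (5/4) < q ^ (T + 1) * (2/3) := by
    rw [pow_succ]
    nlinarith
  have hexp : T + 1 ≤ r * s + ∑ i ∈ range r, β i := by omega
  have hstep3 : q ^ (T+1) * (2/3) ≤ q ^ (r * s + ∑ i ∈ range r, β i) * (2/3) := by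
    have := pow_le_pow_right₀ hq1 hexp
    linarith
  have hstep4 : q ^ (r * s + ∑ i ∈ range r, β i) * (2/3)
      ≤ q ^ (r * s) * ∏ i ∈ range r, uu q (β i) := by
    rw [hR, pow_add, mul_assoc]
    apply mul_le_mul_of_nonneg_left _ (by positivity)
    exact mul_le_mul_of_nonneg_left hlo (by positivity)
  calc ∏ i ∈ range r, uu q (s+1+i) ≤ q ^ T * (5/4) := hstep1
    _ < q ^ (T+1) * (2/3) := hstep2
    _ ≤ q ^ (r * s + ∑ i ∈ range r, β i) * (2/3) := hstep3
    _ ≤ q ^ (r * s) * ∏ i ∈ range r, uu q (β i) := hstep4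

lemma key_le (q : ℝ) (hq : 2 ≤ q) (r s : ℕ) (β : ℕ → ℕ)
    (hdec : ∀ i, i + 1 < r → β (i+1) < β i)
    (h1 : ∀ i < r, 1 ≤ β i)
    (hub : ∀ i < r, β i + i ≤ s + r)
    (h0 : 1 ≤ s → 1 ≤ r → r + 1 ≤ β 0) :
    ∏ i ∈ range r, uu q (s + 1 + i) ≤ q ^ (r * s) * ∏ i ∈ range r, uu q (β i) := by
  rcases Nat.eq_zero_or_pos r with rfl | hr
  · simp
  rcases Nat.eq_zero_or_pos s with rfl | hs
  · have hchain := chain hdec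
    have hβ : ∀ i < r, β i = r - i := by
      intro i hi
      have hu := hub i hi
      rcases Nat.eq_zero_or_pos i with rfl | hipos
      · have := hchain (r-1) 0 (by omega)
        have := h1 (0 + (r-1)) (by omega)
        omega
      · have := hchain (r-1-i) i (by omega)
        have := h1 (i + (r-1-i)) (by omega)
        omega
    have : ∏ i ∈ range r, uu q (0 + 1 + i) = ∏ i ∈ range r, uu q (β i) := by
      have hrefl := Finset.prod_range_reflect (fun j => uu q (j + 1)) r
      calc ∏ i ∈ range r, uu q (0 + 1 + i) = ∏ i ∈ range r, uu q (i + 1) :=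
            Finset.prod_congr rfl fun i _ => by rw [show 0 + 1 + i = i + 1 by omega]
        _ = ∏ j ∈ range r, uu q (r - 1 - j + 1) := hrefl.symm
        _ = ∏ i ∈ range r, uu q (β i) := by
            apply Finset.prod_congr rfl
            intro i hi
            have hir := Finset.mem_range.mp hi
            rw [hβ i hir, show r - 1 - i + 1 = r - i by omega]
    rw [this, Nat.mul_zero, pow_zero, one_mul]
  · exact le_of_lt (key_strict q hq r s hr hs β hdec h1 (h0 hs hr))

lemma hookLength_eq (Y : YoungDiagram) {i j : ℕ} (hc : (i,j) ∈ Y) :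
    hookLength Y (i, j) = (Y.rowLen i - j) + (Y.colLen j - (i+1)) := by
  classical
  unfold hookLength
  have hset : Y.cells.filter (fun d => (i,j).1 ≤ d.1 ∧ (i,j).2 ≤ d.2 ∧ (d.1 = (i,j).1 ∨ d.2 = (i,j).2))
      = ({i} ×ˢ Finset.Ico j (Y.rowLen i)) ∪ ((Finset.Ico (i+1) (Y.colLen j)) ×ˢ {j}) := by
    ext ⟨a, b⟩
    simp only [Finset.mem_filter, Finset.mem_union, Finset.mem_product, Finset.mem_singleton,
      Finset.mem_Ico, YoungDiagram.mem_cells]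
    constructor
    · rintro ⟨hmem, hia, hjb, hab⟩
      rcases hab with rfl | rfl
      · left
        exact ⟨rfl, hjb, YoungDiagram.mem_iff_lt_rowLen.mp hmem⟩
      · rcases Nat.eq_or_lt_of_le hia with rfl | hlt
        · left
          exact ⟨rfl, hjb, YoungDiagram.mem_iff_lt_rowLen.mp hmem⟩
        · right
          exact ⟨⟨hlt, YoungDiagram.mem_iff_lt_colLen.mp hmem⟩, rfl⟩
    · rintro (⟨rfl, hjb, hlt⟩ | ⟨⟨hlt, hcol⟩, rfl⟩)
      · exact ⟨YoungDiagram.mem_iff_lt_rowLen.mpr hlt, le_refl _, hjb, Or.inl rfl⟩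
      · exact ⟨YoungDiagram.mem_iff_lt_colLen.mpr hcol, by omega, le_refl _, Or.inr rfl⟩
  rw [hset, Finset.card_union_of_disjoint, Finset.card_product, Finset.card_product]
  · simp [Nat.card_Ico]
  · rw [Finset.disjoint_left]
    rintro ⟨a, b⟩ ha hb
    simp only [Finset.mem_product, Finset.mem_singleton, Finset.mem_Ico] at ha hb
    omega

lemma hookLength_pos (Y : YoungDiagram) {c : ℕ × ℕ} (hc : c ∈ Y.cells) :
    1 ≤ hookLength Y c := by
  unfold hookLength
  rw [Nat.succ_le_iff, Finset.card_pos]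
  exact ⟨c, Finset.mem_filter.mpr ⟨hc, le_refl _, le_refl _, Or.inl rfl⟩⟩

def efc (Y : YoungDiagram) : YoungDiagram where
  cells := (Y.cells.filter fun c => 1 ≤ c.2).image fun c => (c.1, c.2 - 1)
  isLowerSet := by
    intro a b hba ha
    simp only [Finset.coe_image, Finset.coe_filter, Set.mem_image, Set.mem_setOf_eq] at ha ⊢
    obtain ⟨e, ⟨he, h1⟩, hce⟩ := ha
    refine ⟨(b.1, b.2 + 1), ⟨?_, by omega⟩, by simp⟩
    rw [YoungDiagram.mem_cells] at he ⊢
    have hb1 : b.1 ≤ e.1 := by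
      have := hba.1; rw [← hce] at this; exact this
    have hb2 : b.2 + 1 ≤ e.2 := by
      have := hba.2; rw [← hce] at this; simp at this; omega
    exact Y.up_left_mem hb1 hb2 (by rw [show (e.1, e.2) = e from rfl]; exact he)

lemma efc_cells (Y : YoungDiagram) :
    (efc Y).cells = (Y.cells.filter fun c => 1 ≤ c.2).image fun c => (c.1, c.2 - 1) := rfl

lemma mem_efc {Y : YoungDiagram} {i j : ℕ} : (i, j) ∈ efc Y ↔ (i, j+1) ∈ Y := by
  rw [← YoungDiagram.mem_cells]
  show (i,j) ∈ (Y.cells.filter fun c => 1 ≤ c.2).image (fun c => (c.1, c.2 - 1)) ↔ _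
  simp only [Finset.mem_image, Finset.mem_filter, YoungDiagram.mem_cells, Prod.ext_iff]
  constructor
  · rintro ⟨⟨a, b⟩, ⟨hmem, hb⟩, h1, h2⟩
    simp only at h1 h2 hb
    have : (a, b) = (i, j+1) := by rw [Prod.ext_iff]; constructor <;> omega
    rwa [this] at hmem
  · intro h
    exact ⟨(i, j+1), ⟨h, by omega⟩, rfl, by simp⟩

lemma efc_rowLen (Y : YoungDiagram) (i : ℕ) : (efc Y).rowLen i = Y.rowLen i - 1 := by
  have key : ∀ j, j < (efc Y).rowLen i ↔ j + 1 < Y.rowLen i := fun j => by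
    rw [← YoungDiagram.mem_iff_lt_rowLen, ← YoungDiagram.mem_iff_lt_rowLen, mem_efc]
  have k1 := key ((efc Y).rowLen i)
  have k2 := key ((efc Y).rowLen i - 1)
  have k3 := key (Y.rowLen i - 1)
  have k4 := key (Y.rowLen i)
  omega

lemma efc_colLen (Y : YoungDiagram) (j : ℕ) : (efc Y).colLen j = Y.colLen (j+1) := by
  have key : ∀ i, i < (efc Y).colLen j ↔ i < Y.colLen (j+1) := fun i => by
    rw [← YoungDiagram.mem_iff_lt_colLen, ← YoungDiagram.mem_iff_lt_colLen, mem_efc]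
  have k1 := key ((efc Y).colLen j)
  have k2 := key (Y.colLen (j+1))
  omega

lemma cells_split {M : Type*} [CommMonoid M] (Y : YoungDiagram) (f : ℕ × ℕ → M) :
    ∏ c ∈ Y.cells, f c
      = (∏ i ∈ range (Y.colLen 0), f (i, 0)) * ∏ c ∈ (efc Y).cells, f (c.1, c.2 + 1) := by
  classical
  rw [← Finset.prod_filter_mul_prod_filter_not Y.cells (fun c => c.2 = 0) f]
  congr 1
  · have hcol : Y.cells.filter (fun c => c.2 = 0) = range (Y.colLen 0) ×ˢ {0} := by
      rw [← YoungDiagram.col_eq_prod]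
      rfl
    rw [hcol, Finset.prod_product]
    simp
  · apply Finset.prod_nbij' (fun c => (c.1, c.2 - 1)) (fun c => (c.1, c.2 + 1))
    · intro a ha
      simp only [Finset.mem_filter] at ha
      rw [efc_cells, Finset.mem_image]
      exact ⟨a, Finset.mem_filter.mpr ⟨ha.1, by omega⟩, rfl⟩
    · intro a ha
      rw [efc_cells, Finset.mem_image] at ha
      obtain ⟨e, he, hea⟩ := ha
      simp only [Finset.mem_filter] at he ⊢
      have h2 : a.2 + 1 = e.2 := by rw [← hea]; simp; omega
      have h1 : a.1 = e.1 := by rw [← hea]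
      constructor
      · have : (a.1, a.2+1) = e := by rw [Prod.ext_iff]; exact ⟨h1, h2⟩
        rw [this]; exact he.1
      · omega
    · intro a ha
      simp only [Finset.mem_filter] at ha
      rw [Prod.ext_iff]
      exact ⟨rfl, by simp; omega⟩
    · intro a _; rfl
    · intro a ha
      simp only [Finset.mem_filter] at ha
      congr 1
      rw [Prod.ext_iff]
      exact ⟨rfl, by simp; omega⟩

lemma cells_split_sum {M : Type*} [AddCommMonoid M] (Y : YoungDiagram) (f : ℕ × ℕ → M) :
    ∑ c ∈ Y.cells, f c
      = (∑ i ∈ range (Y.colLen 0), f (i, 0)) + ∑ c ∈ (efc Y).cells, f (c.1, c.2 + 1) := by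
  classical
  rw [← Finset.sum_filter_add_sum_filter_not Y.cells (fun c => c.2 = 0) f]
  congr 1
  · have hcol : Y.cells.filter (fun c => c.2 = 0) = range (Y.colLen 0) ×ˢ {0} := by
      rw [← YoungDiagram.col_eq_prod]
      rfl
    rw [hcol, Finset.sum_product]
    simp
  · apply Finset.sum_nbij' (fun c => (c.1, c.2 - 1)) (fun c => (c.1, c.2 + 1))
    · intro a ha
      simp only [Finset.mem_filter] at ha
      rw [efc_cells, Finset.mem_image]
      exact ⟨a, Finset.mem_filter.mpr ⟨ha.1, by omega⟩, rfl⟩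
    · intro a ha
      rw [efc_cells, Finset.mem_image] at ha
      obtain ⟨e, he, hea⟩ := ha
      simp only [Finset.mem_filter] at he ⊢
      have h2 : a.2 + 1 = e.2 := by rw [← hea]; simp; omega
      have h1 : a.1 = e.1 := by rw [← hea]
      constructor
      · have : (a.1, a.2+1) = e := by rw [Prod.ext_iff]; exact ⟨h1, h2⟩
        rw [this]; exact he.1
      · omega
    · intro a ha
      simp only [Finset.mem_filter] at ha
      rw [Prod.ext_iff]
      exact ⟨rfl, by simp; omega⟩
    · intro a _; rfl
    · intro a ha
      simp only [Finset.mem_filter] at ha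
      congr 1
      rw [Prod.ext_iff]
      exact ⟨rfl, by simp; omega⟩

lemma rowLen_le_card (Y : YoungDiagram) (i : ℕ) : Y.rowLen i ≤ Y.card := by
  rw [Y.rowLen_eq_card]
  exact Finset.card_le_card (Finset.filter_subset _ _)

lemma hook_shift (Y : YoungDiagram) {i j : ℕ} (h : (i, j+1) ∈ Y) :
    hookLength Y (i, j+1) = hookLength (efc Y) (i, j) := by
  have h' : (i, j) ∈ efc Y := mem_efc.mpr h
  rw [hookLength_eq Y h, hookLength_eq (efc Y) h', efc_rowLen, efc_colLen]
  have hj : j + 1 < Y.rowLen i := YoungDiagram.mem_iff_lt_rowLen.mp h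
  omega

lemma col_char (Y : YoungDiagram) (hs : (efc Y).card = 0) :
    Y.cells = (range Y.card).image (fun i => (i, 0)) := by
  classical
  have hempty : (efc Y).cells = ∅ := Finset.card_eq_zero.mp hs
  have hnomem : ∀ a b : ℕ, (a, b+1) ∉ Y := by
    intro a b hmem
    have : (a, b) ∈ (efc Y).cells := (YoungDiagram.mem_cells _).mpr (mem_efc.mpr hmem)
    rw [hempty] at this
    exact absurd this (Finset.notMem_empty _)
  have hr : Y.card = Y.colLen 0 := by
    have hsplit := cells_split_sum Y (fun _ => (1:ℕ))
    show Y.cells.card = _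
    rw [Finset.card_eq_sum_ones, hsplit, hempty]
    simp
  ext ⟨a, b⟩
  simp only [Finset.mem_image, Finset.mem_range, YoungDiagram.mem_cells]
  constructor
  · intro hmem
    have hb : b = 0 := by
      by_contra hb
      exact hnomem a (b-1) (by rwa [show b - 1 + 1 = b by omega])
    subst hb
    exact ⟨a, by rw [hr]; exact YoungDiagram.mem_iff_lt_colLen.mp hmem, rfl⟩
  · rintro ⟨a', ha', heq⟩
    have h1 : a' = a ∧ 0 = b := by
      rw [Prod.ext_iff] at heq; exact ⟨heq.1, heq.2⟩
    obtain ⟨rfl, rfl⟩ := h1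
    rw [hr] at ha'
    exact YoungDiagram.mem_iff_lt_colLen.mpr ha'

lemma main_ineq (q : ℝ) (hq : 2 ≤ q) :
    ∀ n : ℕ, ∀ Y : YoungDiagram, Y.card = n →
      (q ^ aStat Y * ∏ i ∈ range n, uu q (i+1)
        ≤ q ^ (n*(n-1)/2) * ∏ c ∈ Y.cells, uu q (hookLength Y c)) ∧
      (Y.cells ≠ (range n).image (fun i => (i,0)) →
        q ^ aStat Y * ∏ i ∈ range n, uu q (i+1)
        < q ^ (n*(n-1)/2) * ∏ c ∈ Y.cells, uu q (hookLength Y c)) := by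
  intro n
  induction n using Nat.strong_induction_on with
  | _ n ih =>
  intro Y hY
  have hq0 : (0:ℝ) < q := by linarith
  rcases Nat.eq_zero_or_pos n with rfl | hn
  · have hcells : Y.cells = ∅ := Finset.card_eq_zero.mp hY
    constructor
    · simp [aStat, hcells]
    · intro hne
      exfalso
      apply hne
      rw [hcells]
      simp
  -- n ≥ 1
  have hne0 : Y.cells.Nonempty := by
    apply Finset.card_pos.mp
    have hYc : Y.cells.card = n := hY
    omega
  obtain ⟨c0, hc0⟩ := hne0
  have h00 : (0,0) ∈ Y := by
    apply Y.up_left_mem (Nat.zero_le _) (Nat.zero_le _)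
    rw [show (c0.1, c0.2) = c0 from rfl]
    exact (Y.mem_cells c0).mp hc0
  set r := Y.colLen 0 with hrdef
  set Y' := efc Y with hY'def
  set s := Y'.card with hsdef
  have hr : 1 ≤ r := by
    have := YoungDiagram.mem_iff_lt_colLen.mp h00
    omega
  have hcard : n = s + r := by
    have hsplit := cells_split_sum Y (fun _ => (1:ℕ))
    have h1 : Y.cells.card = r + s := by
      rw [Finset.card_eq_sum_ones, hsplit]
      simp only [Finset.sum_const, smul_eq_mul, mul_one, Finset.card_range]
      rfl
    have : Y.card = Y.cells.card := rfl
    omega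
  have hstat : aStat Y = (∑ i ∈ range r, i) + aStat Y' := by
    have := cells_split_sum Y (fun c => c.1)
    exact this
  -- facts about the first-column hooks
  have hmemcol : ∀ i < r, (i, 0) ∈ Y := fun i hi => YoungDiagram.mem_iff_lt_colLen.mpr hi
  have hrowpos : ∀ i < r, 1 ≤ Y.rowLen i := by
    intro i hi
    have := YoungDiagram.mem_iff_lt_rowLen.mp (hmemcol i hi)
    omega
  have hBdef : ∀ i < r, hookLength Y (i, 0) = Y.rowLen i + (r - (i+1)) := by
    intro i hi
    rw [hookLength_eq Y (hmemcol i hi)]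
    omega
  have hdec : ∀ i, i + 1 < r → hookLength Y (i+1, 0) < hookLength Y (i, 0) := by
    intro i hi
    rw [hBdef (i+1) hi, hBdef i (by omega)]
    have hanti := Y.rowLen_anti i (i+1) (by omega)
    have := hrowpos (i+1) hi
    omega
  have h1B : ∀ i < r, 1 ≤ hookLength Y (i, 0) := by
    intro i hi
    rw [hBdef i hi]
    have := hrowpos i hi
    omega
  have hubB : ∀ i < r, hookLength Y (i, 0) + i ≤ s + r := by
    intro i hi
    rw [hBdef i hi]
    have h1 : Y'.rowLen i ≤ s := rowLen_le_card Y' i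
    have h2 : Y'.rowLen i = Y.rowLen i - 1 := efc_rowLen Y i
    have := hrowpos i hi
    omega
  have h0B : 1 ≤ s → 1 ≤ r → r + 1 ≤ hookLength Y (0, 0) := by
    intro hs _
    have hne' : Y'.cells.Nonempty := by
      apply Finset.card_pos.mp
      have hYc : Y'.cells.card = s := rfl
      omega
    obtain ⟨c', hc'⟩ := hne'
    have h00' : (0,0) ∈ Y' := by
      apply Y'.up_left_mem (Nat.zero_le _) (Nat.zero_le _)
      rw [show (c'.1, c'.2) = c' from rfl]
      exact (Y'.mem_cells c').mp hc'
    have h01 : (0, 1) ∈ Y := mem_efc.mp h00'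
    have : 1 < Y.rowLen 0 := YoungDiagram.mem_iff_lt_rowLen.mp h01
    rw [hBdef 0 (by omega)]
    omega
  -- product splittings
  have hprodcells : ∏ c ∈ Y.cells, uu q (hookLength Y c)
      = (∏ i ∈ range r, uu q (hookLength Y (i, 0)))
        * ∏ c ∈ Y'.cells, uu q (hookLength Y' c) := by
    have hsplit := cells_split Y (fun c => uu q (hookLength Y c))
    rw [hsplit]
    congr 1
    apply Finset.prod_congr rfl
    intro c hc
    have hmem : (c.1, c.2) ∈ Y' := by
      rw [show (c.1, c.2) = c from rfl]
      exact (Y'.mem_cells c).mp hc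
    have hmemY : (c.1, c.2 + 1) ∈ Y := mem_efc.mp hmem
    rw [hook_shift Y hmemY]
  have hranges : ∏ i ∈ range n, uu q (i+1)
      = (∏ i ∈ range s, uu q (i+1)) * ∏ i ∈ range r, uu q (s+1+i) := by
    rw [hcard, Finset.prod_range_add]
    congr 1
    exact Finset.prod_congr rfl fun i _ => by rw [show s + i + 1 = s+1+i by omega]
  -- the two factors
  have IH := ih s (by omega) Y' rfl
  have hkey := key_le q hq r s (fun i => hookLength Y (i, 0)) hdec h1B hubB h0B
  -- positivity
  have posP1 : (0:ℝ) < ∏ i ∈ range s, uu q (i+1) :=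
    Finset.prod_pos fun i _ => uu_pos hq (by omega)
  have posP2 : (0:ℝ) < ∏ i ∈ range r, uu q (s+1+i) :=
    Finset.prod_pos fun i _ => uu_pos hq (by omega)
  have posH' : (0:ℝ) < ∏ c ∈ Y'.cells, uu q (hookLength Y' c) :=
    Finset.prod_pos fun c hc => uu_pos hq (hookLength_pos Y' hc)
  have posB : (0:ℝ) < ∏ i ∈ range r, uu q (hookLength Y (i, 0)) :=
    Finset.prod_pos fun i hi => uu_pos hq (h1B i (Finset.mem_range.mp hi))
  -- exponent arithmetic
  have htri : n*(n-1)/2 = s*(s-1)/2 + (r*(r-1)/2 + r*s) := by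
    rw [hcard]
    exact tri_add s r
  have hsumr : ∑ i ∈ range r, i = r*(r-1)/2 := Finset.sum_range_id r
  -- assemble
  have hLHS : q ^ aStat Y * ∏ i ∈ range n, uu q (i+1)
      = (q ^ aStat Y' * ∏ i ∈ range s, uu q (i+1))
        * (q ^ (r*(r-1)/2) * ∏ i ∈ range r, uu q (s+1+i)) := by
    rw [hstat, hranges, hsumr, pow_add]
    ring
  have hRHS : q ^ (n*(n-1)/2) * ∏ c ∈ Y.cells, uu q (hookLength Y c)
      = (q ^ (s*(s-1)/2) * ∏ c ∈ Y'.cells, uu q (hookLength Y' c))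
        * (q ^ (r*(r-1)/2) * (q ^ (r*s) * ∏ i ∈ range r, uu q (hookLength Y (i, 0)))) := by
    rw [htri, hprodcells, pow_add, pow_add]
    ring
  have hfac2 : q ^ (r*(r-1)/2) * ∏ i ∈ range r, uu q (s+1+i)
      ≤ q ^ (r*(r-1)/2) * (q ^ (r*s) * ∏ i ∈ range r, uu q (hookLength Y (i, 0))) :=
    mul_le_mul_of_nonneg_left hkey (by positivity)
  have posX1 : (0:ℝ) < q ^ aStat Y' * ∏ i ∈ range s, uu q (i+1) := by positivity
  have posY1 : (0:ℝ) < q ^ (s*(s-1)/2) * ∏ c ∈ Y'.cells, uu q (hookLength Y' c) := by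
    positivity
  have posX2 : (0:ℝ) < q ^ (r*(r-1)/2) * ∏ i ∈ range r, uu q (s+1+i) := by positivity
  constructor
  · rw [hLHS, hRHS]
    exact mul_le_mul IH.1 hfac2 (le_of_lt posX2) (le_of_lt posY1)
  · intro hne
    have hs : 1 ≤ s := by
      by_contra hs
      push_neg at hs
      apply hne
      have h0 : Y'.card = 0 := by omega
      rw [hY'def] at h0
      have := col_char Y h0
      rwa [hY] at this
    have hkeys := key_strict q hq r s hr hs (fun i => hookLength Y (i, 0)) hdec h1B
      (h0B hs hr)
    have hfac2s : q ^ (r*(r-1)/2) * ∏ i ∈ range r, uu q (s+1+i)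
        < q ^ (r*(r-1)/2) * (q ^ (r*s) * ∏ i ∈ range r, uu q (hookLength Y (i, 0))) := by
      apply mul_lt_mul_of_pos_left hkeys (by positivity)
    rw [hLHS, hRHS]
    calc (q ^ aStat Y' * ∏ i ∈ range s, uu q (i+1))
          * (q ^ (r*(r-1)/2) * ∏ i ∈ range r, uu q (s+1+i))
        ≤ (q ^ (s*(s-1)/2) * ∏ c ∈ Y'.cells, uu q (hookLength Y' c))
          * (q ^ (r*(r-1)/2) * ∏ i ∈ range r, uu q (s+1+i)) :=
          mul_le_mul_of_nonneg_right IH.1 (le_of_lt posX2)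
      _ < (q ^ (s*(s-1)/2) * ∏ c ∈ Y'.cells, uu q (hookLength Y' c))
          * (q ^ (r*(r-1)/2) * (q ^ (r*s) * ∏ i ∈ range r, uu q (hookLength Y (i, 0)))) :=
          mul_lt_mul_of_pos_left hfac2s posY1

end GUAux

theorem stmt6 (n : ℕ) (hn : 1 ≤ n) (q : ℤ) (hq : 2 ≤ q)
    (Y : YoungDiagram) (hY : Y.card = n)
    (hne : Y.cells ≠ (Finset.range n).image fun i => (i, 0)) :
    Dqminus Y (q : ℝ) < (q : ℝ) ^ (n * (n - 1) / 2) := by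
  have hq2 : (2:ℝ) ≤ (q:ℝ) := by exact_mod_cast hq
  have hq1 : (1:ℝ) ≤ (q:ℝ) := by linarith
  have hq0 : (0:ℝ) < (q:ℝ) := by linarith
  have hden_pos : (0:ℝ) < ∏ c ∈ Y.cells, GUAux.uu (q:ℝ) (hookLength Y c) :=
    Finset.prod_pos fun c hc => GUAux.uu_pos hq2 (GUAux.hookLength_pos Y hc)
  have habs : Dqminus Y (q:ℝ)
      = ((q:ℝ) ^ aStat Y * ∏ i ∈ Finset.range Y.card, GUAux.uu (q:ℝ) (i+1))
        / ∏ c ∈ Y.cells, GUAux.uu (q:ℝ) (hookLength Y c) := by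
    unfold Dqminus
    rw [abs_div, abs_mul, abs_pow, abs_neg, abs_of_nonneg (le_of_lt hq0),
      Finset.abs_prod, Finset.abs_prod]
    congr 1
    · congr 1
      exact Finset.prod_congr rfl fun i _ => GUAux.abs_eq_uu hq1 (i+1)
    · exact Finset.prod_congr rfl fun c _ => GUAux.abs_eq_uu hq1 (hookLength Y c)
  rw [habs, hY, div_lt_iff₀ hden_pos]
  exact (GUAux.main_ineq (q:ℝ) hq2 n Y hY).2 hne
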